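/- Let N ≥ 1, m ∈ ℝ, p ∈ ℕ, C > 0, and let Γ, Γ′ ⊆ ℝ^N ∖ {0} be open cones with Γ′ ⋐ Γ. Let F : ℤ^N × ℤ^N → ℂ satisfy symbol-type bounds of order m and additionally F(θ, ζ) = 0 for every θ ∈ ℤ^N and every ζ ∈ Γ ∩ ℤ^N. Let g : ℤ^N → ℂ satisfy |g(ζ)| ≤ C(1+|ζ|)^p for all ζ ∈ ℤ^N. Then for every k ∈ ℕ there exists C′_k > 0 such that Σ_{η ∈ ℤ^N} |F(ξ−η, η)| · |g(η)| ≤ C′_k (1+|ξ|)^(−k) for every ξ ∈ Γ′ ∩ ℤ^N. -/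

import Mathlib

/-- Inclusion of `ℤᴺ` into `ℝᴺ` with the Euclidean norm. -/
noncomputable def iZ (N : ℕ) (ξ : Fin N → ℤ) : EuclideanSpace ℝ (Fin N) :=
  WithLp.toLp 2 (fun i => (ξ i : ℝ))

/-- An open cone in `ℝᴺ ∖ {0}`. -/
def IsOpenCone (N : ℕ) (Γ : Set (EuclideanSpace ℝ (Fin N))) : Prop :=
  IsOpen Γ ∧ (0 : EuclideanSpace ℝ (Fin N)) ∉ Γ ∧
    ∀ ξ ∈ Γ, ∀ l : ℝ, 0 < l → l • ξ ∈ Γ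

/-- `F` satisfies symbol-type bounds of order `m`. -/
def SymbolBounds (N : ℕ) (m : ℝ) (F : (Fin N → ℤ) → (Fin N → ℤ) → ℂ) : Prop :=
  ∀ k : ℕ, ∃ D > (0 : ℝ), ∀ η ζ : Fin N → ℤ,
    ‖F η ζ‖ ≤ D * ((1 + ‖iZ N η‖) ^ k)⁻¹ * (1 + ‖iZ N ζ‖) ^ m

lemma auxNat : Summable (fun n : ℕ => (((n:ℝ) + 1) ^ (-2 : ℝ))) := by
  have := (Real.summable_nat_rpow (p := -2)).2 (by norm_num)
  exact_mod_cast (summable_nat_add_iff 1).2 this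

lemma auxZ : Summable (fun n : ℤ => (((1:ℝ) + |(n:ℝ)|) ^ 2)⁻¹) := by
  apply Summable.of_nat_of_neg
  · refine Summable.of_nonneg_of_le (fun n => by positivity) (fun n => ?_) auxNat
    rw [Real.rpow_neg (by positivity), Real.rpow_two]
    apply inv_anti₀ (by positivity)
    push_cast [abs_of_nonneg (by positivity : (0:ℝ) ≤ (n:ℝ))]
    nlinarith [sq_nonneg ((n:ℝ))]
  · refine Summable.of_nonneg_of_le (fun n => by positivity) (fun n => ?_) auxNat
    rw [Real.rpow_neg (by positivity), Real.rpow_two]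
    apply inv_anti₀ (by positivity)
    push_cast [abs_neg, abs_of_nonneg (by positivity : (0:ℝ) ≤ (n:ℝ))]
    nlinarith [sq_nonneg ((n:ℝ))]

lemma auxPi : ∀ n : ℕ, Summable (fun η : Fin n → ℤ => ∏ i, (((1:ℝ) + |(η i:ℝ)|) ^ 2)⁻¹) := by
  intro n
  induction n with
  | zero => exact summable_of_finite_support (Set.toFinite _)
  | succ n ih =>
      rw [← (Fin.consEquiv (fun _ : Fin (n+1) => ℤ)).summable_iff]
      have := Summable.mul_of_nonneg auxZ ih (fun n => by positivity)
        (fun η => Finset.prod_nonneg (fun i _ => by positivity))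
      apply this.congr
      intro x
      show _ = ∏ i, (((1:ℝ) + |((Fin.cons x.1 x.2 : Fin (n+1) → ℤ) i : ℝ)|) ^ 2)⁻¹
      rw [Fin.prod_univ_succ]
      simp

lemma coord_le (N : ℕ) (η : Fin N → ℤ) (i : Fin N) : |(η i : ℝ)| ≤ ‖iZ N η‖ := by
  rw [EuclideanSpace.norm_eq]
  have h1 : |(η i : ℝ)| = Real.sqrt (‖iZ N η i‖ ^ 2) := by
    rw [Real.sqrt_sq_eq_abs]; simp [iZ, Real.norm_eq_abs]
  rw [h1]
  apply Real.sqrt_le_sqrt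
  exact Finset.single_le_sum (f := fun j => ‖iZ N η j‖ ^ 2)
    (fun j _ => sq_nonneg _) (Finset.mem_univ i)

lemma auxSum (N : ℕ) : Summable (fun η : Fin N → ℤ => (((1:ℝ) + ‖iZ N η‖) ^ (2*N))⁻¹) := by
  refine Summable.of_nonneg_of_le (fun η => by positivity) (fun η => ?_) (auxPi N)
  rw [show (∏ i, (((1:ℝ) + |(η i : ℝ)|) ^ 2)⁻¹) = (∏ i, ((1:ℝ) + |(η i : ℝ)|) ^ 2)⁻¹
    from Finset.prod_inv_distrib _]
  apply inv_anti₀ (Finset.prod_pos (fun i _ => by positivity))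
  calc ∏ i, ((1:ℝ) + |(η i : ℝ)|) ^ 2
      ≤ ∏ _i : Fin N, ((1:ℝ) + ‖iZ N η‖) ^ 2 := by
        apply Finset.prod_le_prod (fun i _ => by positivity)
        intro i _
        have := coord_le N η i
        nlinarith [abs_nonneg ((η i : ℝ)), norm_nonneg (iZ N η)]
    _ = ((1:ℝ) + ‖iZ N η‖) ^ (2*N) := by
        rw [Finset.prod_const, Finset.card_univ, Fintype.card_fin, ← pow_mul, Nat.mul_comm]


lemma geomSep (N : ℕ) (Γ Γ' : Set (EuclideanSpace ℝ (Fin N)))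
    (hΓ : IsOpenCone N Γ) (hΓ' : IsOpenCone N Γ')
    (hcc : closure (Γ' ∩ Metric.sphere (0 : EuclideanSpace ℝ (Fin N)) 1) ⊆ Γ) :
    ∃ c : ℝ, 0 < c ∧ c ≤ 1 ∧ ∀ x ∈ Γ', ∀ y : EuclideanSpace ℝ (Fin N), y ∉ Γ →
      c * (‖x‖ + ‖y‖) ≤ ‖x - y‖ := by
  set K := closure (Γ' ∩ Metric.sphere (0 : EuclideanSpace ℝ (Fin N)) 1) with hK
  have hKc : IsCompact K := by
    apply Bornology.IsBounded.isCompact_closure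
    exact (Metric.isBounded_sphere).subset Set.inter_subset_right
  obtain ⟨δ, hδ, hthick⟩ := hKc.exists_thickening_subset_open hΓ.1 hcc
  set d := min δ 1 with hd
  have hd0 : 0 < d := lt_min hδ one_pos
  have hd1 : d ≤ 1 := min_le_right _ _
  -- step 1 : d * ‖x‖ ≤ ‖x - y‖
  have step1 : ∀ x ∈ Γ', ∀ y : EuclideanSpace ℝ (Fin N), y ∉ Γ → d * ‖x‖ ≤ ‖x - y‖ := by
    intro x hx y hy
    have hx0 : x ≠ 0 := fun h => hΓ'.2.1 (h ▸ hx)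
    have hxn : (0:ℝ) < ‖x‖ := norm_pos_iff.2 hx0
    set u : EuclideanSpace ℝ (Fin N) := ‖x‖⁻¹ • x with hu
    have huΓ' : u ∈ Γ' := hΓ'.2.2 x hx _ (inv_pos.2 hxn)
    have huS : u ∈ Metric.sphere (0 : EuclideanSpace ℝ (Fin N)) 1 := by
      simp [hu, norm_smul, abs_of_pos (inv_pos.2 hxn), inv_mul_cancel₀ (ne_of_gt hxn)]
    have huK : u ∈ K := subset_closure ⟨huΓ', huS⟩
    set v : EuclideanSpace ℝ (Fin N) := ‖x‖⁻¹ • y with hv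
    have hvΓ : v ∉ Γ := by
      intro hvΓ
      have := hΓ.2.2 v hvΓ ‖x‖ hxn
      rw [hv, smul_smul, mul_inv_cancel₀ (ne_of_gt hxn), one_smul] at this
      exact hy this
    have hdist : δ ≤ dist v u := by
      by_contra h
      push_neg at h
      have : v ∈ Metric.thickening δ K :=
        Metric.mem_thickening_iff.2 ⟨u, huK, h⟩
      exact hvΓ (hthick this)
    have hvu : dist v u = ‖x‖⁻¹ * ‖x - y‖ := by
      rw [dist_eq_norm, hv, hu, ← smul_sub, norm_smul, Real.norm_eq_abs,
        abs_of_pos (inv_pos.2 hxn), norm_sub_rev]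
    rw [hvu] at hdist
    have : δ * ‖x‖ ≤ ‖x - y‖ := by
      rw [← mul_le_mul_iff_right₀ (inv_pos.2 hxn)]
      calc ‖x‖⁻¹ * (δ * ‖x‖) = δ * (‖x‖⁻¹ * ‖x‖) := by ring
        _ = δ := by rw [inv_mul_cancel₀ (ne_of_gt hxn), mul_one]
        _ ≤ ‖x‖⁻¹ * ‖x - y‖ := hdist
    calc d * ‖x‖ ≤ δ * ‖x‖ := by
          apply mul_le_mul_of_nonneg_right (min_le_left _ _) (le_of_lt hxn)
      _ ≤ ‖x - y‖ := this
  refine ⟨d / (2 + d), by positivity, ?_, ?_⟩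
  · rw [div_le_one (by linarith)]; linarith
  · intro x hx y hy
    have h1 := step1 x hx y hy
    have h2 : ‖y‖ ≤ ‖x‖ + ‖x - y‖ := by
      calc ‖y‖ = ‖x - (x - y)‖ := by congr 1; abel
        _ ≤ ‖x‖ + ‖x - y‖ := norm_sub_le _ _
    rw [div_mul_eq_mul_div, div_le_iff₀ (by linarith : (0:ℝ) < 2 + d)]
    nlinarith [norm_nonneg x, norm_nonneg (x - y)]

lemma pow_split {a b c1 E : ℝ} (ha : 0 ≤ a) (hb : 0 ≤ b) (hc : 0 < c1)
    (hE : c1 * (1 + a + b) ≤ 1 + E) (k1 k2 : ℕ) :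
    c1 ^ (k1 + k2) * ((1 + a) ^ k1 * (1 + b) ^ k2) ≤ (1 + E) ^ (k1 + k2) := by
  calc c1 ^ (k1+k2) * ((1+a)^k1 * (1+b)^k2)
      ≤ c1 ^ (k1+k2) * ((1+a+b)^k1 * (1+a+b)^k2) := by
        apply mul_le_mul_of_nonneg_left _ (by positivity)
        apply mul_le_mul (pow_le_pow_left₀ (by linarith) (by linarith) _)
          (pow_le_pow_left₀ (by linarith) (by linarith) _) (by positivity) (by positivity)
    _ = (c1 * (1+a+b)) ^ (k1+k2) := by rw [mul_pow, pow_add, pow_add]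
    _ ≤ (1+E) ^ (k1+k2) := pow_le_pow_left₀ (by positivity) hE _

lemma iZ_sub (N : ℕ) (ξ η : Fin N → ℤ) : iZ N (ξ - η) = iZ N ξ - iZ N η := by
  ext i
  show ((ξ i - η i : ℤ) : ℝ) = (iZ N ξ - iZ N η) i
  push_cast
  rfl

theorem stmt_16 (N : ℕ) (hN : 1 ≤ N) (m : ℝ) (p : ℕ) (C : ℝ) (hC : 0 < C)
    (Γ Γ' : Set (EuclideanSpace ℝ (Fin N)))
    (hΓ : IsOpenCone N Γ) (hΓ' : IsOpenCone N Γ')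
    (hcc : closure (Γ' ∩ Metric.sphere (0 : EuclideanSpace ℝ (Fin N)) 1) ⊆ Γ)
    (F : (Fin N → ℤ) → (Fin N → ℤ) → ℂ) (hF : SymbolBounds N m F)
    (hFvan : ∀ θ ζ : Fin N → ℤ, iZ N ζ ∈ Γ → F θ ζ = 0)
    (g : (Fin N → ℤ) → ℂ)
    (hg : ∀ ζ : Fin N → ℤ, ‖g ζ‖ ≤ C * (1 + ‖iZ N ζ‖) ^ p) :
    ∀ k : ℕ, ∃ C' > (0 : ℝ), ∀ ξ : Fin N → ℤ, iZ N ξ ∈ Γ' →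
      Summable (fun η : Fin N → ℤ =>
        ‖F (ξ - η) η‖ * ‖g η‖) ∧
      (∑' η : Fin N → ℤ, ‖F (ξ - η) η‖ * ‖g η‖)
        ≤ C' * ((1 + ‖iZ N ξ‖) ^ k)⁻¹ := by
  intro k
  obtain ⟨c, hc0, hc1, hgeom⟩ := geomSep N Γ Γ' hΓ hΓ' hcc
  set M : ℕ := ⌈m⌉₊ with hM
  set k' : ℕ := k + (M + p + 2*N) with hk'
  obtain ⟨D, hD, hDb⟩ := hF k'
  set A : ℝ := D * C * (c ^ k')⁻¹ with hA
  set T : ℝ := ∑' η : Fin N → ℤ, (((1:ℝ) + ‖iZ N η‖) ^ (2*N))⁻¹ with hT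
  have hT0 : 0 ≤ T := tsum_nonneg (fun η => by positivity)
  have hA0 : 0 < A := by positivity
  refine ⟨A * T + 1, by positivity, ?_⟩
  intro ξ hξ
  set x := iZ N ξ with hx
  have hsummh : Summable (fun η : Fin N → ℤ =>
      A * ((1 + ‖x‖) ^ k)⁻¹ * (((1:ℝ) + ‖iZ N η‖) ^ (2*N))⁻¹) :=
    (auxSum N).mul_left _
  have hbound : ∀ η : Fin N → ℤ,
      ‖F (ξ - η) η‖ * ‖g η‖ ≤
        A * ((1 + ‖x‖) ^ k)⁻¹ * (((1:ℝ) + ‖iZ N η‖) ^ (2*N))⁻¹ := by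
    intro η
    set y := iZ N η with hy
    have hb1 : (1:ℝ) ≤ 1 + ‖y‖ := by linarith [norm_nonneg y]
    have hb1x : (1:ℝ) ≤ 1 + ‖x‖ := by linarith [norm_nonneg x]
    by_cases hin : y ∈ Γ
    · rw [hFvan (ξ - η) η hin]
      simp only [map_zero, norm_zero, zero_mul]
      positivity
    · have hxy := hgeom x hξ y hin
      have hE : c * (1 + ‖x‖ + ‖y‖) ≤ 1 + ‖x - y‖ := by nlinarith
      have hsplit := pow_split (norm_nonneg x) (norm_nonneg y) hc0 hE k (M + p + 2*N)
      have hQpos : (0:ℝ) < c ^ k' * ((1 + ‖x‖) ^ k * (1 + ‖y‖) ^ (M + p + 2*N)) := by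
        positivity
      have hinv : ((1 + ‖x - y‖) ^ k')⁻¹ ≤
          (c ^ k')⁻¹ * (((1 + ‖x‖) ^ k)⁻¹ * ((1 + ‖y‖) ^ (M + p + 2*N))⁻¹) := by
        have h := inv_anti₀ hQpos hsplit
        rwa [mul_inv, mul_inv] at h
      have hFb := hDb (ξ - η) η
      rw [iZ_sub, ← hx, ← hy] at hFb
      have hrm : (1 + ‖y‖) ^ m ≤ (1 + ‖y‖) ^ (M:ℕ) := by
        have h := Real.rpow_le_rpow_of_exponent_le hb1 (Nat.le_ceil m)
        rwa [Real.rpow_natCast] at h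
      have hF2 : ‖F (ξ - η) η‖ ≤ D * ((1 + ‖x - y‖) ^ k')⁻¹ * (1 + ‖y‖) ^ (M:ℕ) := by
        calc ‖F (ξ - η) η‖ ≤ D * ((1 + ‖x - y‖) ^ k')⁻¹ * (1 + ‖y‖) ^ m := hFb
          _ ≤ D * ((1 + ‖x - y‖) ^ k')⁻¹ * (1 + ‖y‖) ^ (M:ℕ) := by
              apply mul_le_mul_of_nonneg_left hrm (by positivity)
      calc ‖F (ξ - η) η‖ * ‖g η‖
          ≤ (D * ((1 + ‖x - y‖) ^ k')⁻¹ * (1 + ‖y‖) ^ (M:ℕ)) * (C * (1 + ‖y‖) ^ p) := by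
            apply mul_le_mul hF2 (hg η) (norm_nonneg _) (by positivity)
        _ = D * C * (1 + ‖y‖) ^ (M + p) * ((1 + ‖x - y‖) ^ k')⁻¹ := by
            rw [pow_add]; ring
        _ ≤ D * C * (1 + ‖y‖) ^ (M + p) *
              ((c ^ k')⁻¹ * (((1 + ‖x‖) ^ k)⁻¹ * ((1 + ‖y‖) ^ (M + p + 2*N))⁻¹)) := by
            apply mul_le_mul_of_nonneg_left hinv (by positivity)
        _ = A * ((1 + ‖x‖) ^ k)⁻¹ *
              ((1 + ‖y‖) ^ (M + p) * ((1 + ‖y‖) ^ (M + p + 2*N))⁻¹) := by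
            rw [hA]; ring
        _ = A * ((1 + ‖x‖) ^ k)⁻¹ * (((1:ℝ) + ‖y‖) ^ (2*N))⁻¹ := by
            congr 1
            rw [pow_add ((1:ℝ) + ‖y‖) (M + p) (2*N), mul_inv, ← mul_assoc,
              mul_inv_cancel₀ (by positivity : ((1:ℝ) + ‖y‖) ^ (M + p) ≠ 0), one_mul]
  have hsumm : Summable (fun η : Fin N → ℤ =>
      ‖F (ξ - η) η‖ * ‖g η‖) :=
    Summable.of_nonneg_of_le
      (fun η => mul_nonneg (norm_nonneg _) (norm_nonneg _))
      hbound hsummh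
  refine ⟨hsumm, ?_⟩
  calc (∑' η : Fin N → ℤ, ‖F (ξ - η) η‖ * ‖g η‖)
      ≤ ∑' η : Fin N → ℤ, A * ((1 + ‖x‖) ^ k)⁻¹ * (((1:ℝ) + ‖iZ N η‖) ^ (2*N))⁻¹ :=
        Summable.tsum_le_tsum hbound hsumm hsummh
    _ = A * ((1 + ‖x‖) ^ k)⁻¹ * T := by rw [hT, tsum_mul_left]
    _ ≤ (A * T + 1) * ((1 + ‖x‖) ^ k)⁻¹ := by
        have h1 : (0:ℝ) ≤ ((1 + ‖x‖) ^ k)⁻¹ := by positivity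
        nlinarith
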